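/- Let N ≥ 1, q ∈ [1, ∞], and let f ∈ L^1(ℝ^N) satisfy ∫_{ℝ^N} f(x) dx = 0. Then lim_{t → ∞} t^{N(1 - 1/q)} ‖P_t * f‖_{L^q(ℝ^N)} = 0, where P_t * f denotes the convolution of f with the dilated Poisson kernel P_t. -/

import Mathlib

open MeasureTheory Real Filter ENNReal

/-- The normalizing constant of the Poisson kernel on `ℝ^N`. -/
noncomputable def cN (N : ℕ) : ℝ :=
  Real.Gamma (((N : ℝ) + 1) / 2) / Real.pi ^ (((N : ℝ) + 1) / 2)

/-- The Poisson kernel `P(x) = c_N (1 + ‖x‖²)^{-(N+1)/2}` on `ℝ^N`. -/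
noncomputable def P (N : ℕ) (x : EuclideanSpace ℝ (Fin N)) : ℝ :=
  cN N * (1 + ‖x‖ ^ 2) ^ (-(((N : ℝ) + 1) / 2))

/-- The dilated Poisson kernel `P_t(x) = t^{-N} P(x/t)`. -/
noncomputable def Pt (N : ℕ) (t : ℝ) (x : EuclideanSpace ℝ (Fin N)) : ℝ :=
  t ^ (-(N : ℝ)) * P N (t⁻¹ • x)

section Prelim
variable (N : ℕ)

lemma cN_pos : 0 < cN N :=
  div_pos (Real.Gamma_pos_of_pos (by positivity)) (Real.rpow_pos_of_pos Real.pi_pos _)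

lemma P_pos (x : EuclideanSpace ℝ (Fin N)) : 0 < P N x :=
  mul_pos (cN_pos N) (Real.rpow_pos_of_pos (by positivity) _)

lemma P_le (x : EuclideanSpace ℝ (Fin N)) : P N x ≤ cN N := by
  have h1 : (1 + ‖x‖ ^ 2 : ℝ) ^ (-(((N : ℝ) + 1) / 2)) ≤ 1 :=
    Real.rpow_le_one_of_one_le_of_nonpos (by nlinarith [norm_nonneg x, sq_nonneg ‖x‖])
      (neg_nonpos.mpr (by positivity))
  exact mul_le_of_le_one_right (cN_pos N).le h1

lemma P_cont : Continuous (P N) :=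
  continuous_const.mul ((continuous_const.add ((continuous_norm).pow 2)).rpow_const
    fun x => Or.inl (show (1:ℝ) + ‖x‖ ^ 2 ≠ 0 by positivity))

lemma psi_lip (a b : ℝ) :
    |(1 + b ^ 2 : ℝ) ^ (-(((N : ℝ) + 1) / 2)) - (1 + a ^ 2) ^ (-(((N : ℝ) + 1) / 2))|
      ≤ (((N : ℝ) + 1) / 2) * |b - a| := by
  set s : ℝ := ((N : ℝ) + 1) / 2 with hs
  have hs0 : 0 < s := by positivity
  have key : ∀ x ∈ (Set.univ : Set ℝ), HasDerivWithinAt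
      (fun r : ℝ => (1 + r ^ 2) ^ (-s))
      ((2 * x ^ 1) * (-s) * (1 + x ^ 2) ^ (-s - 1)) Set.univ x := by
    intro x _
    have h1 : HasDerivAt (fun r : ℝ => 1 + r ^ 2) (2 * x ^ 1) x := by
      simpa using (hasDerivAt_pow 2 x).const_add 1
    exact ((h1.rpow_const (Or.inl (by positivity))).congr_deriv (by ring)).hasDerivWithinAt
  have bound : ∀ x ∈ (Set.univ : Set ℝ),
      ‖(2 * x ^ 1) * (-s) * (1 + x ^ 2) ^ (-s - 1)‖ ≤ s := by
    intro x _
    have h2 : |2 * x ^ 1| ≤ 1 + x ^ 2 := by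
      rw [abs_mul]
      have := sq_nonneg (|x| - 1)
      have hx : |x| ^ 2 = x ^ 2 := sq_abs x
      simp only [pow_one, abs_two]
      nlinarith [abs_nonneg x]
    have hpos : (0:ℝ) < 1 + x ^ 2 := by positivity
    have h3 : (0:ℝ) ≤ (1 + x ^ 2) ^ (-s - 1) := (Real.rpow_pos_of_pos hpos _).le
    calc ‖(2 * x ^ 1) * (-s) * (1 + x ^ 2) ^ (-s - 1)‖
        = |2 * x ^ 1| * s * (1 + x ^ 2) ^ (-s - 1) := by
          rw [Real.norm_eq_abs, abs_mul, abs_mul, abs_of_nonneg h3, abs_neg, abs_of_nonneg hs0.le]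
      _ ≤ (1 + x ^ 2) * s * (1 + x ^ 2) ^ (-s - 1) := by
          apply mul_le_mul_of_nonneg_right (mul_le_mul_of_nonneg_right h2 hs0.le) h3
      _ = s * ((1 + x ^ 2) ^ (1:ℝ) * (1 + x ^ 2) ^ (-s - 1)) := by
          rw [Real.rpow_one]; ring
      _ = s * (1 + x ^ 2) ^ (-s) := by rw [← Real.rpow_add hpos]; ring_nf
      _ ≤ s * 1 := by
          apply mul_le_mul_of_nonneg_left _ hs0.le
          exact Real.rpow_le_one_of_one_le_of_nonpos (by nlinarith [sq_nonneg x]) (by linarith)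
      _ = s := mul_one s
  have := convex_univ.norm_image_sub_le_of_norm_hasDerivWithin_le key bound
    (Set.mem_univ a) (Set.mem_univ b)
  simpa [Real.norm_eq_abs] using this

lemma P_dist (a b : EuclideanSpace ℝ (Fin N)) :
    |P N a - P N b| ≤ (cN N * (((N : ℝ) + 1) / 2)) * ‖a - b‖ := by
  have h1 : |P N a - P N b|
      = cN N * |(1 + ‖a‖ ^ 2 : ℝ) ^ (-(((N : ℝ) + 1) / 2))
        - (1 + ‖b‖ ^ 2) ^ (-(((N : ℝ) + 1) / 2))| := by
    rw [P, P, ← mul_sub, abs_mul, abs_of_nonneg (cN_pos N).le]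
  rw [h1, mul_assoc]
  apply mul_le_mul_of_nonneg_left _ (cN_pos N).le
  calc |(1 + ‖a‖ ^ 2 : ℝ) ^ (-(((N : ℝ) + 1) / 2)) - (1 + ‖b‖ ^ 2) ^ (-(((N : ℝ) + 1) / 2))|
      ≤ (((N : ℝ) + 1) / 2) * |‖a‖ - ‖b‖| := psi_lip N ‖b‖ ‖a‖
    _ ≤ (((N : ℝ) + 1) / 2) * ‖a - b‖ := by
        apply mul_le_mul_of_nonneg_left (abs_norm_sub_norm_le a b) (by positivity)

lemma P_integrable : Integrable (P N) volume := by
  have hnr : (Module.finrank ℝ (EuclideanSpace ℝ (Fin N)) : ℝ) < (N : ℝ) + 1 := by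
    rw [finrank_euclideanSpace_fin]; linarith
  have h := (integrable_rpow_neg_one_add_norm_sq
    (μ := (volume : Measure (EuclideanSpace ℝ (Fin N)))) hnr).const_mul (cN N)
  have : P N = fun x : EuclideanSpace ℝ (Fin N) =>
      cN N * ((1 : ℝ) + ‖x‖ ^ 2) ^ (-((N : ℝ) + 1) / 2) := by
    funext x; rw [P, neg_div]
  rw [this]; exact h

end Prelim

section T
variable (N : ℕ)
local notation "Ẽ" => EuclideanSpace ℝ (Fin N)

/-- The `L¹` distance between `P` and its translate by `z`. -/
noncomputable def Tfun (z : Ẽ) : ℝ≥0∞ := eLpNorm (fun u => P N (u - z) - P N u) 1 volume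

lemma hmp (z : Ẽ) : MeasurePreserving (fun x : Ẽ => x - z) volume volume :=
  measurePreserving_sub_right volume z

lemma T_zero : Tfun N 0 = 0 := by
  have : (fun u : Ẽ => P N (u - 0) - P N u) = fun _ => 0 := by funext u; simp
  rw [Tfun, this]; simp

lemma T_bound (z : Ẽ) : Tfun N z ≤ 2 * eLpNorm (P N) 1 volume := by
  have h1 : AEStronglyMeasurable (fun u : Ẽ => P N (u - z)) volume :=
    ((P_cont N).comp (continuous_id.sub continuous_const)).aestronglyMeasurable
  have h2 := eLpNorm_sub_le h1 (P_cont N).aestronglyMeasurable (le_refl (1 : ℝ≥0∞))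
  have h3 : eLpNorm (fun u : Ẽ => P N (u - z)) 1 volume = eLpNorm (P N) 1 volume :=
    eLpNorm_comp_measurePreserving (P_cont N).aestronglyMeasurable (hmp N z)
  calc Tfun N z ≤ eLpNorm (fun u : Ẽ => P N (u - z)) 1 volume + eLpNorm (P N) 1 volume := h2
    _ = 2 * eLpNorm (P N) 1 volume := by rw [h3, two_mul]

lemma T_cont : Continuous (Tfun N) := by
  haveI : Fact ((1:ℝ≥0∞) ≤ 1) := ⟨le_refl 1⟩
  set Pl : Lp ℝ 1 (volume : Measure Ẽ) :=
    (memLp_one_iff_integrable.mpr (P_integrable N)).toLp (P N) with hPl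
  set cm : C(Ẽ, C(Ẽ, Ẽ)) := ContinuousMap.curry ⟨fun p : Ẽ × Ẽ => p.2 - p.1, by fun_prop⟩
    with hcm
  have hcmz : ∀ z : Ẽ, ⇑(cm z) = fun x : Ẽ => x - z := fun z => rfl
  have hmp' : ∀ z : Ẽ, MeasurePreserving (cm z) volume volume := fun z => by
    rw [hcmz]; exact hmp N z
  set F : Ẽ → Lp ℝ 1 (volume : Measure Ẽ) :=
    fun z => Lp.compMeasurePreserving (cm z) (hmp' z) Pl with hF
  have hcontF : Continuous F :=
    Continuous.compMeasurePreservingLp continuous_const (map_continuous cm) hmp' one_ne_top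
  have heq : ∀ z, Tfun N z = (‖F z - Pl‖₊ : ℝ≥0∞) := by
    intro z
    have e1 : ⇑(F z - Pl) =ᵐ[volume] ⇑(F z) - ⇑Pl := Lp.coeFn_sub (F z) Pl
    have e2 : ⇑(F z) =ᵐ[volume] ⇑Pl ∘ (cm z) := Lp.coeFn_compMeasurePreserving Pl (hmp' z)
    have e3 : ⇑Pl =ᵐ[volume] P N := MemLp.coeFn_toLp _
    have e4 : (⇑Pl ∘ (cm z)) =ᵐ[volume] (P N) ∘ (cm z) :=
      (hmp' z).quasiMeasurePreserving.ae_eq_comp e3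
    have e5 : ⇑(F z - Pl) =ᵐ[volume] fun u => P N (u - z) - P N u := by
      filter_upwards [e1, e2.trans e4, e3] with u h1 h2 h3
      rw [h1, Pi.sub_apply, h2, h3]; rfl
    have := eLpNorm_congr_ae (μ := (volume : Measure Ẽ)) (p := (1:ℝ≥0∞)) e5
    rw [Tfun, ← this, Lp.nnnorm_def, ENNReal.coe_toNNReal (Lp.eLpNorm_ne_top _)]
  have : Continuous fun z => (‖F z - Pl‖₊ : ℝ≥0∞) :=
    ENNReal.continuous_coe.comp ((hcontF.sub continuous_const).nnnorm)
  exact this.congr fun z => (heq z).symm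

lemma T_tendsto : Tendsto (Tfun N) (nhds 0) (nhds 0) := by
  have := (T_cont N).tendsto 0
  rwa [T_zero] at this

end T

section Main
variable (N : ℕ) (f' : EuclideanSpace ℝ (Fin N) → ℝ)
local notation "Ẽ" => EuclideanSpace ℝ (Fin N)
local notation "L₀" => cN N * (((N : ℝ) + 1) / 2)

/-- Real-valued dominating quantity for the sup-norm bound. -/
noncomputable def aFun (t : ℝ) : ℝ :=
  ∫ y : Ẽ, min (2 * cN N) (L₀ * (t⁻¹ * ‖y‖)) * |f' y|

/-- Dominating quantity for the L¹ bound. -/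
noncomputable def BFun (t : ℝ) : ℝ≥0∞ :=
  ∫⁻ y : Ẽ, Tfun N (t⁻¹ • y) * ‖f' y‖₊

variable {N f'}

lemma Pt_cont {t : ℝ} : Continuous (Pt N t) :=
  continuous_const.mul ((P_cont N).comp (continuous_id.const_smul t⁻¹))

lemma Pt_abs_le {t : ℝ} (ht : 0 < t) (z : Ẽ) : |Pt N t z| ≤ t ^ (-(N:ℝ)) * cN N := by
  have h0 : (0:ℝ) < t ^ (-(N:ℝ)) := Real.rpow_pos_of_pos ht _
  rw [Pt, abs_mul, abs_of_pos h0, abs_of_pos (P_pos N _)]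
  exact mul_le_mul_of_nonneg_left (P_le N _) h0.le

lemma ker_bound {t : ℝ} (ht : 0 < t) (x y : Ẽ) :
    |Pt N t (x - y) - Pt N t x|
      ≤ t ^ (-(N:ℝ)) * min (2 * cN N) (L₀ * (t⁻¹ * ‖y‖)) := by
  have h0 : (0:ℝ) < t ^ (-(N:ℝ)) := Real.rpow_pos_of_pos ht _
  have h1 : Pt N t (x - y) - Pt N t x
      = t ^ (-(N:ℝ)) * (P N (t⁻¹ • (x - y)) - P N (t⁻¹ • x)) := by
    rw [Pt, Pt, mul_sub]
  rw [h1, abs_mul, abs_of_pos h0]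
  apply mul_le_mul_of_nonneg_left _ h0.le
  apply le_min
  · calc |P N (t⁻¹ • (x - y)) - P N (t⁻¹ • x)|
        ≤ |P N (t⁻¹ • (x - y))| + |P N (t⁻¹ • x)| := abs_sub _ _
      _ ≤ cN N + cN N := by
          apply add_le_add
          · rw [abs_of_pos (P_pos N _)]; exact P_le N _
          · rw [abs_of_pos (P_pos N _)]; exact P_le N _
      _ = 2 * cN N := by ring
  · calc |P N (t⁻¹ • (x - y)) - P N (t⁻¹ • x)|
        ≤ L₀ * ‖t⁻¹ • (x - y) - t⁻¹ • x‖ := P_dist N _ _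
      _ = L₀ * (t⁻¹ * ‖y‖) := by
          rw [← smul_sub]
          have : x - y - x = -y := by abel
          rw [this, norm_smul, norm_neg, Real.norm_eq_abs, abs_of_pos (inv_pos.mpr ht)]

variable (hf'm : StronglyMeasurable f') (hf' : Integrable f' volume)
include hf'm hf'

omit hf'm hf' in
lemma min_nonneg' {t : ℝ} (ht : 0 < t) (y : Ẽ) :
    0 ≤ min (2 * cN N) (L₀ * (t⁻¹ * ‖y‖)) :=
  le_min (by linarith [cN_pos N])
    (mul_nonneg (mul_nonneg (cN_pos N).le (by positivity))
      (mul_nonneg (inv_pos.mpr ht).le (norm_nonneg _)))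

lemma integrable_min_mul {t : ℝ} (ht : 0 < t) :
    Integrable (fun y : Ẽ => min (2 * cN N) (L₀ * (t⁻¹ * ‖y‖)) * |f' y|) volume := by
  have hc : Continuous (fun y : Ẽ => min (2 * cN N) (L₀ * (t⁻¹ * ‖y‖))) :=
    continuous_const.min (continuous_const.mul (continuous_const.mul continuous_norm))
  refine Integrable.mono' ((hf'.abs).const_mul (2 * cN N))
    ((hc.measurable.mul hf'm.measurable.abs).aestronglyMeasurable)
    (Filter.Eventually.of_forall fun y => ?_)
  have hmin0 := min_nonneg' ht y
  have hmin1 : min (2 * cN N) (L₀ * (t⁻¹ * ‖y‖)) ≤ 2 * cN N := min_le_left _ _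
  rw [Real.norm_eq_abs, abs_mul, abs_abs, abs_of_nonneg hmin0]
  exact mul_le_mul_of_nonneg_right hmin1 (abs_nonneg _)

lemma conv_integrable {t : ℝ} (ht : 0 < t) (x : Ẽ) :
    Integrable (fun y : Ẽ => Pt N t (x - y) * f' y) volume := by
  apply Integrable.bdd_mul hf'
    ((Pt_cont.comp (continuous_const.sub continuous_id)).aestronglyMeasurable)
  exact Filter.Eventually.of_forall fun y => by
    rw [Real.norm_eq_abs]; exact Pt_abs_le ht _

lemma conv_sub_integrable {t : ℝ} (ht : 0 < t) (x : Ẽ) :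
    Integrable (fun y : Ẽ => (Pt N t (x - y) - Pt N t x) * f' y) volume := by
  have : (fun y : Ẽ => (Pt N t (x - y) - Pt N t x) * f' y)
      = fun y => Pt N t (x - y) * f' y - Pt N t x * f' y := by
    funext y; ring
  rw [this]
  exact (conv_integrable hf'm hf' ht x).sub (hf'.const_mul _)

lemma conv_repr (hmean' : (∫ y, f' y) = 0) {t : ℝ} (ht : 0 < t) (x : Ẽ) :
    (∫ y, Pt N t (x - y) * f' y) = ∫ y, (Pt N t (x - y) - Pt N t x) * f' y := by
  have : (fun y : Ẽ => (Pt N t (x - y) - Pt N t x) * f' y)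
      = fun y => Pt N t (x - y) * f' y - Pt N t x * f' y := by
    funext y; ring
  rw [this, integral_sub (conv_integrable hf'm hf' ht x) (hf'.const_mul _),
    integral_const_mul, hmean', mul_zero, sub_zero]

lemma conv_abs_bound (hmean' : (∫ y, f' y) = 0) {t : ℝ} (ht : 0 < t) (x : Ẽ) :
    |∫ y, Pt N t (x - y) * f' y| ≤ t ^ (-(N:ℝ)) * aFun N f' t := by
  rw [conv_repr hf'm hf' hmean' ht x]
  have habs : Integrable (fun y : Ẽ => |Pt N t (x - y) - Pt N t x| * |f' y|) volume := by
    have h := (conv_sub_integrable hf'm hf' ht x).abs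
    have e : (fun y : Ẽ => |(Pt N t (x - y) - Pt N t x) * f' y|)
        = fun y => |Pt N t (x - y) - Pt N t x| * |f' y| := funext fun y => abs_mul _ _
    rwa [e] at h
  calc |∫ y, (Pt N t (x - y) - Pt N t x) * f' y|
      ≤ ∫ y, |Pt N t (x - y) - Pt N t x| * |f' y| := by
        simpa [Real.norm_eq_abs, abs_mul] using
          norm_integral_le_integral_norm (fun y : Ẽ => (Pt N t (x - y) - Pt N t x) * f' y)
    _ ≤ ∫ y, t ^ (-(N:ℝ)) * (min (2 * cN N) (L₀ * (t⁻¹ * ‖y‖)) * |f' y|) := by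
        apply integral_mono habs ((integrable_min_mul hf'm hf' ht).const_mul _)
        intro y
        dsimp only
        rw [← mul_assoc]
        exact mul_le_mul_of_nonneg_right (ker_bound ht x y) (abs_nonneg _)
    _ = t ^ (-(N:ℝ)) * aFun N f' t := by
        rw [integral_const_mul, aFun]

lemma aFun_nonneg {t : ℝ} (ht : 0 < t) : 0 ≤ aFun N f' t := by
  apply integral_nonneg
  intro y
  exact mul_nonneg (min_nonneg' ht y) (abs_nonneg _)

lemma aFun_tendsto : Tendsto (aFun N f') atTop (nhds 0) := by
  have h0 : (0:ℝ) = ∫ y : Ẽ, (0:ℝ) := by simp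
  rw [h0]
  apply tendsto_integral_filter_of_dominated_convergence
    (fun y : Ẽ => 2 * cN N * |f' y|)
  · filter_upwards [eventually_gt_atTop (0:ℝ)] with t ht
    exact ((continuous_const.min
      (continuous_const.mul (continuous_const.mul continuous_norm))).measurable.mul
      hf'm.measurable.abs).aestronglyMeasurable
  · filter_upwards [eventually_gt_atTop (0:ℝ)] with t ht
    apply Filter.Eventually.of_forall
    intro y
    have hmin0 := min_nonneg' ht y
    rw [Real.norm_eq_abs, abs_mul, abs_abs, abs_of_nonneg hmin0]
    exact mul_le_mul_of_nonneg_right (min_le_left _ _) (abs_nonneg _)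
  · exact (hf'.abs).const_mul (2 * cN N)
  · apply Filter.Eventually.of_forall
    intro y
    have h1 : Tendsto (fun t : ℝ => L₀ * (t⁻¹ * ‖y‖)) atTop (nhds (L₀ * (0 * ‖y‖))) :=
      tendsto_const_nhds.mul (tendsto_inv_atTop_zero.mul_const ‖y‖)
    rw [zero_mul, mul_zero] at h1
    have h2 : Tendsto (fun t : ℝ => min (2 * cN N) (L₀ * (t⁻¹ * ‖y‖))) atTop
        (nhds (min (2 * cN N) 0)) := tendsto_const_nhds.min h1
    rw [min_eq_right (by linarith [cN_pos N])] at h2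
    simpa using h2.mul_const |f' y|

lemma L1_bound (hmean' : (∫ y, f' y) = 0) {t : ℝ} (ht : 0 < t) :
    (∫⁻ x : Ẽ, (‖∫ y, Pt N t (x - y) * f' y‖₊ : ℝ≥0∞)) ≤ BFun N f' t := by
  -- kernel measurability
  have hKc : Continuous (fun p : Ẽ × Ẽ => Pt N t (p.1 - p.2) - Pt N t p.1) :=
    (Pt_cont.comp (continuous_fst.sub continuous_snd)).sub (Pt_cont.comp continuous_fst)
  have hKm : Measurable (fun p : Ẽ × Ẽ => (‖Pt N t (p.1 - p.2) - Pt N t p.1‖₊ : ℝ≥0∞)) :=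
    hKc.measurable.enorm
  have hfm2 : Measurable (fun p : Ẽ × Ẽ => (‖f' p.2‖₊ : ℝ≥0∞)) :=
    (hf'm.measurable.comp measurable_snd).enorm
  have step1 : (∫⁻ x : Ẽ, (‖∫ y, Pt N t (x - y) * f' y‖₊ : ℝ≥0∞))
      ≤ ∫⁻ x : Ẽ, ∫⁻ y : Ẽ, (‖Pt N t (x - y) - Pt N t x‖₊ : ℝ≥0∞) * ‖f' y‖₊ := by
    apply lintegral_mono
    intro x
    dsimp only
    rw [conv_repr hf'm hf' hmean' ht x]
    refine (enorm_integral_le_lintegral_enorm _).trans (le_of_eq ?_)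
    apply lintegral_congr
    intro y
    rw [← ENNReal.coe_mul, ← nnnorm_mul]
    rfl
  have step2 : (∫⁻ x : Ẽ, ∫⁻ y : Ẽ, (‖Pt N t (x - y) - Pt N t x‖₊ : ℝ≥0∞) * ‖f' y‖₊)
      = ∫⁻ y : Ẽ, ∫⁻ x : Ẽ, (‖Pt N t (x - y) - Pt N t x‖₊ : ℝ≥0∞) * ‖f' y‖₊ :=
    lintegral_lintegral_swap ((hKm.mul hfm2).aemeasurable)
  have hinner : ∀ y : Ẽ, (∫⁻ x : Ẽ, (‖Pt N t (x - y) - Pt N t x‖₊ : ℝ≥0∞))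
      = Tfun N (t⁻¹ • y) := by
    intro y
    have hHc : Continuous (fun u : Ẽ => P N (u - t⁻¹ • y) - P N u) :=
      ((P_cont N).comp (continuous_id.sub continuous_const)).sub (P_cont N)
    have hH : Measurable (fun u : Ẽ => (‖P N (u - t⁻¹ • y) - P N u‖₊ : ℝ≥0∞)) := hHc.measurable.enorm
    have hker : ∀ x : Ẽ, Pt N t (x - y) - Pt N t x
        = t ^ (-(N:ℝ)) * (P N (t⁻¹ • x - t⁻¹ • y) - P N (t⁻¹ • x)) := by
      intro x
      rw [Pt, Pt, ← mul_sub, smul_sub]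
    have e1 : (∫⁻ x : Ẽ, (‖Pt N t (x - y) - Pt N t x‖₊ : ℝ≥0∞))
        = (‖t ^ (-(N:ℝ))‖₊ : ℝ≥0∞)
          * ∫⁻ x : Ẽ, (‖P N (t⁻¹ • x - t⁻¹ • y) - P N (t⁻¹ • x)‖₊ : ℝ≥0∞) := by
      rw [← lintegral_const_mul (‖t ^ (-(N:ℝ))‖₊ : ℝ≥0∞)
        (show Measurable fun x : Ẽ => (‖P N (t⁻¹ • x - t⁻¹ • y) - P N (t⁻¹ • x)‖₊ : ℝ≥0∞)
          from hH.comp (measurable_const_smul t⁻¹))]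
      apply lintegral_congr
      intro x
      rw [hker x, nnnorm_mul, ENNReal.coe_mul]
    have e2 : (∫⁻ x : Ẽ, (‖P N (t⁻¹ • x - t⁻¹ • y) - P N (t⁻¹ • x)‖₊ : ℝ≥0∞))
        = ENNReal.ofReal |((t⁻¹) ^ (Module.finrank ℝ Ẽ))⁻¹|
          * ∫⁻ u : Ẽ, (‖P N (u - t⁻¹ • y) - P N u‖₊ : ℝ≥0∞) := by
      have hmap := Measure.map_addHaar_smul (μ := (volume : Measure Ẽ))
        (inv_ne_zero ht.ne')
      calc (∫⁻ x : Ẽ, (‖P N (t⁻¹ • x - t⁻¹ • y) - P N (t⁻¹ • x)‖₊ : ℝ≥0∞))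
          = ∫⁻ u : Ẽ, (‖P N (u - t⁻¹ • y) - P N u‖₊ : ℝ≥0∞)
            ∂(Measure.map (t⁻¹ • ·) volume) := by
            rw [lintegral_map hH (measurable_const_smul t⁻¹)]
        _ = ENNReal.ofReal |((t⁻¹) ^ (Module.finrank ℝ Ẽ))⁻¹|
            * ∫⁻ u : Ẽ, (‖P N (u - t⁻¹ • y) - P N u‖₊ : ℝ≥0∞) := by
            rw [hmap, lintegral_smul_measure, smul_eq_mul]
    have hconst : (‖t ^ (-(N:ℝ))‖₊ : ℝ≥0∞)
        * ENNReal.ofReal |((t⁻¹) ^ (Module.finrank ℝ Ẽ))⁻¹| = 1 := by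
      have hc : (0:ℝ) < t ^ (N:ℕ) := pow_pos ht N
      have h1 : t ^ (-(N:ℝ)) = (t ^ (N:ℕ))⁻¹ := by
        rw [Real.rpow_neg ht.le, Real.rpow_natCast]
      have h2 : |((t⁻¹) ^ (Module.finrank ℝ Ẽ))⁻¹| = t ^ (N:ℕ) := by
        rw [finrank_euclideanSpace_fin, inv_pow, inv_inv, abs_of_pos hc]
      rw [h1, h2, ← enorm_eq_nnnorm, Real.enorm_eq_ofReal (inv_pos.mpr hc).le, ← ENNReal.ofReal_mul
        (inv_pos.mpr hc).le, inv_mul_cancel₀ hc.ne', ENNReal.ofReal_one]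
    rw [e1, e2, ← mul_assoc, hconst, one_mul, Tfun, eLpNorm_one_eq_lintegral_enorm]
    rfl
  refine step1.trans (le_of_eq ?_)
  rw [step2, BFun]
  apply lintegral_congr
  intro y
  have hKy : Measurable fun x : Ẽ => (‖Pt N t (x - y) - Pt N t x‖₊ : ℝ≥0∞) :=
    ((Pt_cont.comp (continuous_id.sub continuous_const)).sub Pt_cont).measurable.enorm
  rw [lintegral_mul_const _ hKy, hinner y]

lemma BFun_tendsto : Tendsto (BFun N f') atTop (nhds 0) := by
  have h0 : (0:ℝ≥0∞) = ∫⁻ _ : Ẽ, 0 := by simp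
  rw [h0]
  apply tendsto_lintegral_filter_of_dominated_convergence
    (fun y : Ẽ => 2 * eLpNorm (P N) 1 volume * ‖f' y‖₊)
  · apply Filter.Eventually.of_forall
    intro t
    exact (((T_cont N).comp (continuous_const_smul t⁻¹)).measurable).mul
      hf'm.measurable.enorm
  · apply Filter.Eventually.of_forall
    intro t
    apply Filter.Eventually.of_forall
    intro y
    exact mul_le_mul_left (T_bound N _) _
  · rw [lintegral_const_mul _ hf'm.measurable.nnnorm.coe_nnreal_ennreal]
    exact (ENNReal.mul_ne_top
      (ENNReal.mul_ne_top ofNat_ne_top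
        (memLp_one_iff_integrable.mpr (P_integrable N)).eLpNorm_ne_top)
      hf'.2.ne)
  · apply Filter.Eventually.of_forall
    intro y
    have h1 : Tendsto (fun s : ℝ => s⁻¹ • y) atTop (nhds (0 : Ẽ)) := by
      have := tendsto_inv_atTop_zero (𝕜 := ℝ)
      simpa using this.smul_const y
    have h2 : Tendsto (fun s : ℝ => Tfun N (s⁻¹ • y)) atTop (nhds 0) :=
      (T_tendsto N).comp h1
    simpa using ENNReal.Tendsto.mul_const h2 (Or.inr coe_ne_top)

end Main

theorem stmt_8 (N : ℕ) (hN : 1 ≤ N) (q : ℝ≥0∞) (hq : 1 ≤ q)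
    (f : EuclideanSpace ℝ (Fin N) → ℝ)
    (hf : Integrable f volume) (hmean : (∫ x, f x) = 0) :
    Tendsto (fun t : ℝ => ENNReal.ofReal (t ^ ((N : ℝ) * (1 - (1 / q).toReal)))
        * eLpNorm (fun x => ∫ y, Pt N t (x - y) * f y) q volume)
      atTop (nhds 0) := by
  obtain ⟨f', hf'm, hfg⟩ := hf.1
  have hf' : Integrable f' volume := hf.congr hfg
  have hmean' : (∫ y, f' y) = 0 := by rw [← integral_congr_ae hfg]; exact hmean
  have hrw : ∀ (t : ℝ) (x : EuclideanSpace ℝ (Fin N)),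
      (∫ y, Pt N t (x - y) * f y) = ∫ y, Pt N t (x - y) * f' y := fun t x =>
    integral_congr_ae (hfg.mono fun y hy => by dsimp only; rw [hy])
  simp only [hrw]
  -- limits of the two dominating quantities
  have hAlim : Tendsto (fun t => ENNReal.ofReal (aFun N f' t)) atTop (nhds 0) := by
    simpa using ENNReal.tendsto_ofReal (aFun_tendsto hf'm hf')
  have hBlim : Tendsto (BFun N f') atTop (nhds 0) := BFun_tendsto hf'm hf'
  by_cases hqt : q = ⊤
  · subst hqt
    simp only [one_div, ENNReal.inv_top, ENNReal.toReal_zero, sub_zero, mul_one]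
    refine tendsto_of_tendsto_of_tendsto_of_le_of_le' tendsto_const_nhds hAlim
      (Filter.Eventually.of_forall fun t => zero_le) ?_
    filter_upwards [eventually_gt_atTop (0:ℝ)] with t ht
    have hb : eLpNorm (fun x => ∫ y, Pt N t (x - y) * f' y) ⊤ volume
        ≤ ENNReal.ofReal (t ^ (-(N:ℝ)) * aFun N f' t) := by
      rw [eLpNorm_exponent_top]
      apply eLpNormEssSup_le_of_ae_bound (C := t ^ (-(N:ℝ)) * aFun N f' t)
      apply Filter.Eventually.of_forall
      intro x
      rw [Real.norm_eq_abs]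
      exact conv_abs_bound hf'm hf' hmean' ht x
    calc ENNReal.ofReal (t ^ (N:ℝ)) * eLpNorm (fun x => ∫ y, Pt N t (x - y) * f' y) ⊤ volume
        ≤ ENNReal.ofReal (t ^ (N:ℝ)) * ENNReal.ofReal (t ^ (-(N:ℝ)) * aFun N f' t) :=
          mul_le_mul_right hb _
      _ = ENNReal.ofReal (aFun N f' t) := by
          rw [← ENNReal.ofReal_mul (Real.rpow_nonneg ht.le _), ← mul_assoc,
            ← Real.rpow_add ht, add_neg_cancel, Real.rpow_zero, one_mul]
  · -- finite q
    have hq0 : q ≠ 0 := (lt_of_lt_of_le zero_lt_one hq).ne'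
    set r : ℝ := q.toReal with hrdef
    have hr1 : 1 ≤ r := by
      have := ENNReal.toReal_mono hqt hq
      simpa using this
    have hr0 : 0 < r := lt_of_lt_of_le one_pos hr1
    have hinvr : (0:ℝ) < 1 / r := by positivity
    have hiq : (1/q).toReal = 1/r := by rw [one_div, one_div, ENNReal.toReal_inv]
    simp only [hiq]
    set c1 : ℝ := 1 - 1/r with hc1def
    have hc1 : 0 ≤ c1 := by
      have : 1/r ≤ 1 := by rw [div_le_one hr0]; exact hr1
      simp only [hc1def]; linarith
    have ha_ne : ((0:ℝ≥0∞) ^ c1) ≠ ⊤ := by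
      rcases hc1.eq_or_lt with h | h
      · rw [← h, ENNReal.rpow_zero]; exact one_ne_top
      · rw [ENNReal.zero_rpow_of_pos h]; exact zero_ne_top
    have hA : Tendsto (fun t => (ENNReal.ofReal (aFun N f' t)) ^ c1) atTop
        (nhds ((0:ℝ≥0∞) ^ c1)) :=
      (ENNReal.continuous_rpow_const.tendsto 0).comp hAlim
    have hB : Tendsto (fun t => (BFun N f' t) ^ (1/r)) atTop (nhds 0) := by
      have := ((ENNReal.continuous_rpow_const (y := 1/r)).tendsto 0).comp hBlim
      rwa [ENNReal.zero_rpow_of_pos hinvr] at this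
    have hmul := ENNReal.Tendsto.mul hA (Or.inr zero_ne_top) hB (Or.inr ha_ne)
    rw [mul_zero] at hmul
    refine tendsto_of_tendsto_of_tendsto_of_le_of_le' tendsto_const_nhds hmul
      (Filter.Eventually.of_forall fun t => zero_le) ?_
    filter_upwards [eventually_gt_atTop (0:ℝ)] with t ht
    set g : EuclideanSpace ℝ (Fin N) → ℝ := fun x => ∫ y, Pt N t (x - y) * f' y with hgdef
    set C : ℝ≥0∞ := ENNReal.ofReal (t ^ (-(N:ℝ)) * aFun N f' t) with hCdef
    have hCne : C ≠ ⊤ := ofReal_ne_top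
    have hCx : ∀ x, (‖g x‖₊ : ℝ≥0∞) ≤ C := by
      intro x
      rw [← enorm_eq_nnnorm, Real.enorm_eq_ofReal_abs]
      exact ENNReal.ofReal_le_ofReal (conv_abs_bound hf'm hf' hmean' ht x)
    have hpoint : ∀ x, (‖g x‖₊ : ℝ≥0∞) ^ r ≤ C ^ (r - 1) * ‖g x‖₊ := by
      intro x
      rcases eq_or_ne (‖g x‖₊ : ℝ≥0∞) 0 with h0 | h0
      · rw [h0, ENNReal.zero_rpow_of_pos hr0, mul_zero]
      · have : (‖g x‖₊ : ℝ≥0∞) ^ r = (‖g x‖₊ : ℝ≥0∞) ^ (r - 1) * (‖g x‖₊ : ℝ≥0∞) ^ (1:ℝ) := by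
          rw [← ENNReal.rpow_add _ _ h0 coe_ne_top]
          norm_num
        rw [this, ENNReal.rpow_one]
        exact mul_le_mul_left (ENNReal.rpow_le_rpow (hCx x) (by linarith)) _
    have hCfin : C ^ (r - 1) ≠ ⊤ := ENNReal.rpow_ne_top_of_nonneg (by linarith) hCne
    have hlint : (∫⁻ x, (‖g x‖₊ : ℝ≥0∞) ^ r) ≤ C ^ (r - 1) * BFun N f' t := by
      refine (lintegral_mono hpoint).trans ?_
      rw [lintegral_const_mul' _ _ hCfin]
      exact mul_le_mul_right (L1_bound hf'm hf' hmean' ht) _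
    have hsnorm : eLpNorm g q volume ≤ (C ^ (r - 1)) ^ (1/r) * (BFun N f' t) ^ (1/r) := by
      rw [eLpNorm_eq_lintegral_rpow_enorm_toReal hq0 hqt,
        ← ENNReal.mul_rpow_of_nonneg _ _ hinvr.le]
      exact ENNReal.rpow_le_rpow hlint hinvr.le
    have hfront : ENNReal.ofReal (t ^ ((N:ℝ) * c1)) * (C ^ (r - 1)) ^ (1/r)
        = ENNReal.ofReal (aFun N f' t) ^ c1 := by
      have e0 : (r - 1) * (1/r) = c1 := by
        rw [hc1def, sub_mul, one_mul, mul_one_div_cancel hr0.ne']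
      have e1 : (C ^ (r - 1)) ^ (1/r) = C ^ c1 := by
        rw [← ENNReal.rpow_mul, e0]
      have e2 : C = ENNReal.ofReal (t ^ (-(N:ℝ))) * ENNReal.ofReal (aFun N f' t) := by
        rw [hCdef, ENNReal.ofReal_mul (Real.rpow_nonneg ht.le _)]
      have e3 : ENNReal.ofReal (t ^ (-(N:ℝ))) ^ c1 = ENNReal.ofReal (t ^ (-(N:ℝ) * c1)) := by
        rw [ENNReal.ofReal_rpow_of_pos (Real.rpow_pos_of_pos ht _), ← Real.rpow_mul ht.le]
      rw [e1, e2, ENNReal.mul_rpow_of_nonneg _ _ hc1, e3, ← mul_assoc,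
        ← ENNReal.ofReal_mul (Real.rpow_nonneg ht.le _), ← Real.rpow_add ht]
      norm_num
    calc ENNReal.ofReal (t ^ ((N:ℝ) * c1)) * eLpNorm g q volume
        ≤ ENNReal.ofReal (t ^ ((N:ℝ) * c1)) * ((C ^ (r - 1)) ^ (1/r) * (BFun N f' t) ^ (1/r)) :=
          mul_le_mul_right hsnorm _
      _ = (ENNReal.ofReal (t ^ ((N:ℝ) * c1)) * (C ^ (r - 1)) ^ (1/r)) * (BFun N f' t) ^ (1/r) := by
          rw [mul_assoc]
      _ = ENNReal.ofReal (aFun N f' t) ^ c1 * (BFun N f' t) ^ (1/r) := by rw [hfront]
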